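/- There is a bijection between equivalence classes of deterministic agents (with memory M, actions A, observations Ω, where two agents are equivalent iff they induce the same one-step interaction on every deterministic POMDP) and one-input process functions w : M × Ω → M × A. -/
import Mathlib


/-- A deterministic agent with memory `M`, actions `A`, observations `Ω`. -/
structure Agent (M A Ω : Type) where
  policy : M → A
  update : M × A × Ω → M

/-- One-step interaction of an agent with a POMDP `(T, O, R)`. -/
def Agent.step {M A Ω S : Type} (ag : Agent M A Ω)
    (T : S × A → S) (O : S × A → Ω) (R : S × A → ℝ) (m : M) (s : S) :
    M × S × ℝ :=
  (ag.update (m, ag.policy m, O (s, ag.policy m)),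
    T (s, ag.policy m), R (s, ag.policy m))

/-- Behavioural equivalence of agents: same one-step interaction on every
deterministic POMDP. -/
def agentSetoid (M A Ω : Type) : Setoid (Agent M A Ω) where
  r ag bg := ∀ (S : Type) (T : S × A → S) (O : S × A → Ω) (R : S × A → ℝ)
      (m : M) (s : S), ag.step T O R m s = bg.step T O R m s
  iseqv := by
    constructor
    · intro _ _ _ _ _ _ _; rfl
    · intro _ _ h S T O R m s; exact (h S T O R m s).symm
    · intro _ _ _ h1 h2 S T O R m s; exact (h1 S T O R m s).trans (h2 S T O R m s)

/-- There is a bijection between equivalence classes of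
deterministic agents and one-input process functions `w : M × Ω → M × A`. -/
theorem stmt_8 (M A Ω : Type) [Nonempty M] [Nonempty A] [Nonempty Ω] :
    Nonempty (Quotient (agentSetoid M A Ω) ≃
      { w : M × Ω → M × A //
        ∀ (f : A → Ω) (m : M), ∃! o : Ω, o = f (w (m, o)).2 }) := by
  classical
  let toW : Agent M A Ω → { w : M × Ω → M × A //
      ∀ (f : A → Ω) (m : M), ∃! o : Ω, o = f (w (m, o)).2 } :=
    fun ag => ⟨fun p => (ag.update (p.1, ag.policy p.1, p.2), ag.policy p.1),
      fun f m => ⟨f (ag.policy m), rfl, fun o ho => ho⟩⟩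
  have hresp : ∀ a b, (agentSetoid M A Ω).r a b → toW a = toW b := by
    intro a b h
    apply Subtype.ext
    funext p
    obtain ⟨m, o⟩ := p
    have h1 := h A (fun sa => sa.2) (fun _ => o) (fun _ => 0) m (a.policy m)
    have hpol : a.policy m = b.policy m := congrArg (fun x => x.2.1) h1
    have h2 := h Ω (fun sa => sa.1) (fun sa => sa.1) (fun _ => 0) m o
    have hupd : a.update (m, a.policy m, o) = b.update (m, b.policy m, o) :=
      congrArg (fun x => x.1) h2
    show (a.update (m, a.policy m, o), a.policy m)
        = (b.update (m, b.policy m, o), b.policy m)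
    rw [hupd, hpol]
  let F : Quotient (agentSetoid M A Ω) → { w : M × Ω → M × A //
      ∀ (f : A → Ω) (m : M), ∃! o : Ω, o = f (w (m, o)).2 } :=
    Quotient.lift toW hresp
  have hinj : Function.Injective F := by
    intro qa qb
    induction qa using Quotient.inductionOn with | h a =>
    induction qb using Quotient.inductionOn with | h b =>
    intro hab
    have hab' : (toW a).1 = (toW b).1 := congrArg Subtype.val hab
    apply Quotient.sound
    intro S T O R m s
    have hpol : a.policy m = b.policy m :=
      congrArg (fun g => (g (m, Classical.arbitrary Ω)).2) hab'
    have hupd : ∀ o : Ω, a.update (m, a.policy m, o) = b.update (m, b.policy m, o) :=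
      fun o => congrArg (fun g => (g (m, o)).1) hab'
    show (a.update (m, a.policy m, O (s, a.policy m)), T (s, a.policy m), R (s, a.policy m))
        = (b.update (m, b.policy m, O (s, b.policy m)), T (s, b.policy m), R (s, b.policy m))
    rw [hupd, hpol]
  have hsurj : Function.Surjective F := by
    rintro ⟨w, hw⟩
    -- the second component of `w (m, o)` does not depend on `o`
    have hconst : ∀ (m : M) (o o' : Ω), (w (m, o)).2 = (w (m, o')).2 := by
      intro m o o'
      by_contra hne
      set f : A → Ω := fun a => if a = (w (m, o)).2 then o else o' with hf
      obtain ⟨x, hx, huniq⟩ := hw f m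
      have ho : o = f (w (m, o)).2 := by simp [hf]
      have ho' : o' = f (w (m, o')).2 := by
        show o' = if (w (m, o')).2 = (w (m, o)).2 then o else o'
        rw [if_neg (fun h => hne h.symm)]
      have : o = o' := (huniq o ho).trans (huniq o' ho').symm
      exact hne (this ▸ rfl)
    let o₀ : Ω := Classical.arbitrary Ω
    refine ⟨Quotient.mk _ ⟨fun m => (w (m, o₀)).2, fun p => (w (p.1, p.2.2)).1⟩, ?_⟩
    apply Subtype.ext
    funext p
    obtain ⟨m, o⟩ := p
    show ((w (m, o)).1, (w (m, o₀)).2) = w (m, o)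
    rw [hconst m o₀ o]
  exact ⟨Equiv.ofBijective F ⟨hinj, hsurj⟩⟩
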